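/- arXiv:2602.17554 — 3 statements merged into one kernel-verified Lean document; each statement's English description precedes it below -/
import Mathlib

section
/- The JSD gap lower bound: let Π be a set of probability distributions on a finite set X, let ε_k = inf_{π ∈ Π} D_KL(p_k ‖ π) be the best-in-class error for source p_k, and let π_λ ∈ Π be any element of Π (in particular the minimizer of D_KL(p_λ ‖ ·) over Π). Then D_KL(p_λ ‖ π_λ) ≥ ∑_k λ_k ε_k − JSD^λ(p_1,...,p_n), where p_λ = ∑_k λ_k p_k and JSD^λ = ∑_k λ_k D_KL(p_k ‖ p_λ). -/
open Finset

/-- Kullback-Leibler divergence on a finite type, with convention 0·log 0 = 0. -/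
noncomputable def KL {X : Type*} [Fintype X] (p q : X → ℝ) : ℝ :=
  ∑ x, p x * Real.log (p x / q x)

/-- `p` is a probability mass function on a finite type. -/
def IsPMF {X : Type*} [Fintype X] (p : X → ℝ) : Prop :=
  (∀ x, 0 ≤ p x) ∧ ∑ x, p x = 1

lemma KL_nonneg {X : Type*} [Fintype X] (p q : X → ℝ) (hp : IsPMF p) (hq : IsPMF q)
    (hpos : ∀ x, 0 < p x → 0 < q x) : 0 ≤ KL p q := by
  have key : ∀ x, p x - q x ≤ p x * Real.log (p x / q x) := by
    intro x
    rcases eq_or_lt_of_le (hp.1 x) with h0 | h0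
    · simp [← h0]
      linarith [hq.1 x]
    · have hqx := hpos x h0
      have h1 : Real.log (q x / p x) ≤ q x / p x - 1 :=
        Real.log_le_sub_one_of_pos (by positivity)
      have h2 : Real.log (q x / p x) = -Real.log (p x / q x) := by
        rw [Real.log_div hqx.ne' h0.ne', Real.log_div h0.ne' hqx.ne']; ring
      rw [h2] at h1
      have := mul_le_mul_of_nonneg_left h1 (hp.1 x)
      have hne : p x ≠ 0 := h0.ne'
      field_simp at this ⊢
      nlinarith
  calc (0:ℝ) = ∑ x, (p x - q x) := by rw [Finset.sum_sub_distrib, hp.2, hq.2]; ring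
    _ ≤ ∑ x, p x * Real.log (p x / q x) := Finset.sum_le_sum fun x _ => key x
    _ = KL p q := rfl

/-- The JSD gap lower bound: for any π_λ ∈ Fam,
`D(p_λ ‖ π_λ) ≥ ∑_k λ_k ε_k − JSD^λ(p_1,…,p_n)` where `ε_k = inf_{π∈Fam} D(p_k ‖ π)`. -/
theorem jsd_gap_lower_bound
    {X : Type*} [Fintype X] {n : ℕ}
    (p : Fin n → X → ℝ) (hp : ∀ k, IsPMF (p k))
    (l : Fin n → ℝ) (hl : ∀ k, 0 ≤ l k) (hl1 : ∑ k, l k = 1)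
    (Fam : Set (X → ℝ)) (hFamne : Fam.Nonempty)
    (hFam : ∀ π ∈ Fam, IsPMF π ∧ ∀ x, (∃ k, 0 < p k x) → 0 < π x)
    (ε : Fin n → ℝ) (hε : ∀ k, ε k = sInf ((fun π => KL (p k) π) '' Fam))
    (πl : X → ℝ) (hπl : πl ∈ Fam) :
    ∑ k, l k * ε k
        - ∑ k, l k * KL (p k) (fun x => ∑ j, l j * p j x)
      ≤ KL (fun x => ∑ k, l k * p k x) πl := by
  set pl : X → ℝ := fun x => ∑ j, l j * p j x with hpl
  -- ε k ≤ KL (p k) πl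
  have hε_le : ∀ k, ε k ≤ KL (p k) πl := by
    intro k
    rw [hε k]
    apply csInf_le
    · refine ⟨0, ?_⟩
      rintro _ ⟨π, hπ, rfl⟩
      exact KL_nonneg (p k) π (hp k) (hFam π hπ).1
        (fun x hx => (hFam π hπ).2 x ⟨k, hx⟩)
    · exact ⟨πl, hπl, rfl⟩
  -- key identity
  have key : ∑ k, l k * KL (p k) πl
      = ∑ k, l k * KL (p k) pl + KL pl πl := by
    have step : ∀ k x, l k * (p k x * Real.log (p k x / πl x))
        = l k * (p k x * Real.log (p k x / pl x))
          + l k * p k x * Real.log (pl x / πl x) := by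
      intro k x
      rcases eq_or_lt_of_le (hl k) with h0 | h0
      · simp [← h0]
      rcases eq_or_lt_of_le ((hp k).1 x) with h1 | h1
      · simp [← h1]
      have hplx : 0 < pl x := by
        have : l k * p k x ≤ pl x := by
          apply Finset.single_le_sum (f := fun j => l j * p j x) (fun j _ => mul_nonneg (hl j) ((hp j).1 x)) (Finset.mem_univ k)
        nlinarith
      have hπx : 0 < πl x := (hFam πl hπl).2 x ⟨k, h1⟩
      rw [Real.log_div h1.ne' hπx.ne', Real.log_div h1.ne' hplx.ne',
        Real.log_div hplx.ne' hπx.ne']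
      ring
    unfold KL
    simp only [Finset.mul_sum]
    rw [Finset.sum_comm]
    calc ∑ x, ∑ k, l k * (p k x * Real.log (p k x / πl x))
        = ∑ x, ∑ k, (l k * (p k x * Real.log (p k x / pl x))
            + l k * p k x * Real.log (pl x / πl x)) :=
          Finset.sum_congr rfl fun x _ => Finset.sum_congr rfl fun k _ => step k x
      _ = (∑ x, ∑ k, l k * (p k x * Real.log (p k x / pl x)))
            + ∑ x, pl x * Real.log (pl x / πl x) := by
          rw [← Finset.sum_add_distrib]
          refine Finset.sum_congr rfl fun x _ => ?_
          rw [Finset.sum_add_distrib, ← Finset.sum_mul]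
      _ = _ := by rw [Finset.sum_comm]
  have hsum : ∑ k, l k * ε k ≤ ∑ k, l k * KL (p k) πl :=
    Finset.sum_le_sum fun k _ => mul_le_mul_of_nonneg_left (hε_le k) (hl k)
  rw [key] at hsum
  linarith
end

section
/- Capacity lower bound for static gating with disjoint supports: suppose p_1,...,p_n and π_1,...,π_n are probability distributions on a finite set X such that the supports of the π_k are pairwise disjoint, each p_k is supported on the support of π_k, and D_KL(p_k ‖ π_k) = ε_k. Then for any weight vector w in the simplex, the static mixture π_w = ∑_k w_k π_k satisfies max_k D_KL(p_k ‖ π_w) ≥ log(∑_{j=1}^n e^{ε_j}). -/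
open Finset

/-- Extended-real-valued Kullback-Leibler divergence: `⊤` when absolute continuity
fails, with the convention 0·log 0 = 0. -/
noncomputable def KLe {X : Type*} [Fintype X] (p q : X → ℝ) : EReal :=
  ∑ x, if p x = 0 then (0 : EReal)
       else if q x = 0 then (⊤ : EReal)
       else ((p x * Real.log (p x / q x) : ℝ) : EReal)

lemma ereal_coe_sum {α : Type*} (s : Finset α) (f : α → ℝ) :
    ((∑ x ∈ s, f x : ℝ) : EReal) = ∑ x ∈ s, ((f x : ℝ) : EReal) := by
  classical
  induction s using Finset.induction with
  | empty => simp
  | insert a s h ih => simp [Finset.sum_insert h, EReal.coe_add, ih]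

lemma ereal_sum_ne_bot {α : Type*} (s : Finset α) (f : α → EReal)
    (h : ∀ x ∈ s, f x ≠ ⊥) : ∑ x ∈ s, f x ≠ ⊥ := by
  classical
  induction s using Finset.induction with
  | empty => simp
  | @insert a s ha ih =>
    rw [Finset.sum_insert ha]
    have h1 := h a (Finset.mem_insert_self a s)
    have h2 := ih (fun x hx => h x (Finset.mem_insert_of_mem hx))
    intro hc
    rcases EReal.add_eq_bot_iff.mp hc with h | h
    · exact h1 h
    · exact h2 h

lemma ereal_sum_eq_top {α : Type*} (s : Finset α) (f : α → EReal)
    (hbot : ∀ x ∈ s, f x ≠ ⊥) {a : α} (ha : a ∈ s) (hatop : f a = ⊤) :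
    ∑ x ∈ s, f x = ⊤ := by
  classical
  rw [← Finset.sum_erase_add s f ha, hatop]
  exact EReal.add_top_of_ne_bot (ereal_sum_ne_bot _ _ fun x hx =>
    hbot x (Finset.mem_of_mem_erase hx))


/-- Capacity lower bound for static gating with disjoint supports: the worst-case KL
divergence of any static mixture is at least `log (∑_j e^{ε_j})`. -/
theorem static_gating_capacity_lower_bound
    {X : Type*} [Fintype X] {n : ℕ} (hn : 0 < n)
    (p π : Fin n → X → ℝ)
    (hp : ∀ k, IsPMF (p k)) (hπ : ∀ k, IsPMF (π k))
    (hdisj : ∀ k j, k ≠ j → ∀ x, π k x = 0 ∨ π j x = 0)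
    (hsupp : ∀ k x, 0 < p k x → 0 < π k x)
    (ε : Fin n → ℝ) (hε : ∀ k, ε k = KL (p k) (π k))
    (w : Fin n → ℝ) (hw : ∀ k, 0 ≤ w k) (hw1 : ∑ k, w k = 1) :
    ((Real.log (∑ j, Real.exp (ε j)) : ℝ) : EReal)
      ≤ Finset.univ.sup' (Finset.univ_nonempty_iff.mpr (Fin.pos_iff_nonempty.mp hn))
          (fun k => KLe (p k) (fun x => ∑ j, w j * π j x)) := by
  classical
  set S := ∑ j, Real.exp (ε j) with hS
  have hSpos : 0 < S := Finset.sum_pos (fun j _ => Real.exp_pos _)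
    (Finset.univ_nonempty_iff.mpr (Fin.pos_iff_nonempty.mp hn))
  -- choose k with w k ≤ exp (ε k) / S
  have hsum : ∑ k, w k ≤ ∑ k, Real.exp (ε k) / S := by
    rw [hw1, ← Finset.sum_div, ← hS, div_self hSpos.ne']
  obtain ⟨k, -, hk⟩ := Finset.exists_le_of_sum_le
    (Finset.univ_nonempty_iff.mpr (Fin.pos_iff_nonempty.mp hn)) hsum
  -- key: π_w x = w k * π k x  whenever  π k x ≠ 0
  have hπw : ∀ x, π k x ≠ 0 → ∑ j, w j * π j x = w k * π k x := by
    intro x hx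
    rw [Finset.sum_eq_single k]
    · intro j _ hj
      rcases hdisj j k hj x with h | h
      · rw [h, mul_zero]
      · exact absurd h hx
    · intro h; exact absurd (Finset.mem_univ k) h
  refine le_trans ?_ (Finset.le_sup' _ (Finset.mem_univ k))
  by_cases hwk : w k = 0
  · -- KLe = ⊤
    have hex : ∃ x, 0 < p k x := by
      by_contra hc
      push_neg at hc
      have : ∑ x, p k x = 0 := Finset.sum_eq_zero fun x _ =>
        le_antisymm (hc x) ((hp k).1 x)
      rw [(hp k).2] at this; norm_num at this
    obtain ⟨x0, hx0⟩ := hex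
    have hπk : 0 < π k x0 := hsupp k x0 hx0
    have htop : (if p k x0 = 0 then (0 : EReal)
        else if (∑ j, w j * π j x0) = 0 then (⊤ : EReal)
        else ((p k x0 * Real.log (p k x0 / ∑ j, w j * π j x0) : ℝ) : EReal)) = ⊤ := by
      rw [if_neg hx0.ne', if_pos]
      rw [hπw x0 hπk.ne', hwk, zero_mul]
    have : KLe (p k) (fun x => ∑ j, w j * π j x) = ⊤ := by
      unfold KLe
      exact ereal_sum_eq_top _ _
        (fun x _ => by
          split
          · exact EReal.zero_ne_bot
          · split
            · exact (by simp : (⊤:EReal) ≠ ⊥)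
            · exact EReal.coe_ne_bot _)
        (Finset.mem_univ x0) htop
    rw [this]; exact le_top
  · have hwkpos : 0 < w k := (hw k).lt_of_ne' hwk
    -- KLe equals the real value ε k - log (w k)
    have hval : KLe (p k) (fun x => ∑ j, w j * π j x)
        = ((ε k - Real.log (w k) : ℝ) : EReal) := by
      have hterm : ∀ x, (if p k x = 0 then (0 : EReal)
          else if (∑ j, w j * π j x) = 0 then (⊤ : EReal)
          else ((p k x * Real.log (p k x / ∑ j, w j * π j x) : ℝ) : EReal))
          = ((p k x * Real.log (p k x / π k x) - p k x * Real.log (w k) : ℝ) : EReal) := by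
        intro x
        by_cases hpx : p k x = 0
        · simp [hpx]
        · have hpxpos : 0 < p k x := ((hp k).1 x).lt_of_ne' hpx
          have hπx : 0 < π k x := hsupp k x hpxpos
          have hq : (∑ j, w j * π j x) = w k * π k x := hπw x hπx.ne'
          have hqpos : 0 < w k * π k x := mul_pos hwkpos hπx
          rw [if_neg hpx, if_neg (by rw [hq]; exact hqpos.ne')]
          norm_cast
          rw [hq]
          rw [show p k x / (w k * π k x) = (p k x / π k x) / w k by ring,
            Real.log_div (by positivity) hwkpos.ne', mul_sub]
      unfold KLe
      rw [Finset.sum_congr rfl (fun x _ => hterm x), ← ereal_coe_sum]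
      norm_cast
      rw [Finset.sum_sub_distrib, ← Finset.sum_mul, (hp k).2, one_mul, hε, KL]
    rw [hval]
    rw [EReal.coe_le_coe_iff]
    have hwle : Real.log (w k) ≤ ε k - Real.log S := by
      calc Real.log (w k) ≤ Real.log (Real.exp (ε k) / S) :=
            Real.log_le_log hwkpos hk
        _ = ε k - Real.log S := by
            rw [Real.log_div (Real.exp_pos _).ne' hSpos.ne', Real.log_exp]
    linarith
end

section
/- Under the disjoint-support static gating setup, the softmax weights σ_k = e^{ε_k} / ∑_j e^{ε_j} achieve the capacity lower bound exactly: D_KL(p_k ‖ π_σ) = log(∑_j e^{ε_j}) for every k, where π_σ = ∑_k σ_k π_k. -/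
open Finset

/-- With disjoint expert supports, the softmax weights `σ_k = e^{ε_k}/∑_j e^{ε_j}`
achieve the capacity bound exactly: `D(p_k ‖ π_σ) = log (∑_j e^{ε_j})` for every `k`. -/
theorem softmax_weights_achieve_capacity
    {X : Type*} [Fintype X] {n : ℕ}
    (p π : Fin n → X → ℝ)
    (hp : ∀ k, IsPMF (p k)) (hπ : ∀ k, IsPMF (π k))
    (hdisj : ∀ k j, k ≠ j → ∀ x, π k x = 0 ∨ π j x = 0)
    (hsupp : ∀ k x, 0 < p k x → 0 < π k x)
    (ε : Fin n → ℝ) (hε : ∀ k, ε k = KL (p k) (π k)) :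
    ∀ k, KL (p k)
        (fun x => ∑ j, (Real.exp (ε j) / ∑ i, Real.exp (ε i)) * π j x)
      = Real.log (∑ j, Real.exp (ε j)) := by
  intro k
  have hS : 0 < ∑ i, Real.exp (ε i) :=
    Finset.sum_pos (fun i _ => Real.exp_pos _) ⟨k, Finset.mem_univ k⟩
  set S := ∑ i, Real.exp (ε i) with hSdef
  have key : ∀ x, p k x * Real.log (p k x / ∑ j, (Real.exp (ε j) / S) * π j x)
      = p k x * Real.log (p k x / π k x) - p k x * ε k + p k x * Real.log S := by
    intro x
    rcases lt_or_eq_of_le ((hp k).1 x) with hpos | hzero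
    · have hπpos := hsupp k x hpos
      have hq : (∑ j, (Real.exp (ε j) / S) * π j x) = (Real.exp (ε k) / S) * π k x := by
        rw [Finset.sum_eq_single k]
        · intro j _ hj
          rcases hdisj k j (Ne.symm hj) x with h | h
          · exact absurd h (ne_of_gt hπpos)
          · simp [h]
        · intro h; exact absurd (Finset.mem_univ k) h
      rw [hq]
      have h1 : p k x / ((Real.exp (ε k) / S) * π k x)
          = (p k x / π k x) * (S / Real.exp (ε k)) := by
        field_simp
      rw [h1, Real.log_mul (div_ne_zero (ne_of_gt hpos) (ne_of_gt hπpos))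
            (div_ne_zero (ne_of_gt hS) (Real.exp_ne_zero _)),
          Real.log_div (ne_of_gt hS) (Real.exp_ne_zero _), Real.log_exp]
      ring
    · simp [← hzero]
  show (∑ x, p k x * Real.log (p k x / ∑ j, (Real.exp (ε j) / S) * π j x)) = Real.log S
  simp only [key]
  rw [Finset.sum_add_distrib, Finset.sum_sub_distrib, ← Finset.sum_mul, ← Finset.sum_mul,
    (hp k).2]
  have hek := hε k
  unfold KL at hek
  rw [← hek]
  ring
end
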